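/- Let F, G : 𝔻 → ℝ be harmonic functions on the open unit disc and p, q > 1 with 1/p + 1/q = 1. If ∫_𝔻 (1−|z|²)^{p−2} |∂F/∂z|^p dxdy < ∞ and ∫_𝔻 (1−|z|²)^{q−2} |∂G/∂z|^q dxdy < ∞, then the Jacobian of Φ = F + iG satisfies ∫_𝔻 |J(Φ)| dxdy < ∞. In fact |J(Φ)| = 2|∂G/∂z · conj(∂F/∂z) − ∂F/∂z · conj(∂G/∂z)| and the bound follows from Hölder's inequality (note (1−|z|²)^{(p−2)/p} · (1−|z|²)^{(q−2)/q} = 1). -/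

import Mathlib

open MeasureTheory AddCircle Complex Filter Topology ComplexConjugate ContinuousLinearMap

noncomputable section

namespace HH

/-- The open unit disc in `ℂ`. -/
def disc : Set ℂ := Metric.ball (0 : ℂ) 1

/-- The Wirtinger derivative `∂Φ/∂z = (Φ_x - iΦ_y)/2`. -/
def wirtZ (Φ : ℂ → ℂ) (z : ℂ) : ℂ :=
  (fderiv ℝ Φ z 1 - Complex.I * fderiv ℝ Φ z Complex.I) / 2

/-- The Wirtinger derivative `∂Φ/∂z̄ = (Φ_x + iΦ_y)/2`. -/
def wirtZbar (Φ : ℂ → ℂ) (z : ℂ) : ℂ :=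
  (fderiv ℝ Φ z 1 + Complex.I * fderiv ℝ Φ z Complex.I) / 2

/-- The Jacobian `J(Φ) = |∂Φ/∂z|² - |∂Φ/∂z̄|²`. -/
def jac (Φ : ℂ → ℂ) (z : ℂ) : ℝ := ‖wirtZ Φ z‖ ^ 2 - ‖wirtZbar Φ z‖ ^ 2

/-- The signed multiplicity function `m_Φ(w) = Σ_{z ∈ 𝔻, Φ(z) = w} sgn(J(Φ)(z))`. -/
def mult (Φ : ℂ → ℂ) (w : ℂ) : ℝ :=
  ∑' z : ↥(disc ∩ Φ ⁻¹' {w}), Real.sign (jac Φ (z : ℂ))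

/-- The Wirtinger derivative `∂F/∂z = (F_x - iF_y)/2` of a real-valued function. -/
def wirtR (F : ℂ → ℝ) (z : ℂ) : ℂ :=
  ((fderiv ℝ F z 1 : ℝ) - Complex.I * ((fderiv ℝ F z Complex.I : ℝ) : ℂ)) / 2

/-- `F` is harmonic on the open unit disc: it is `C²` there with vanishing Laplacian. -/
def HarmonicOnDisc (F : ℂ → ℝ) : Prop :=
  ContDiffOn ℝ 2 F disc ∧
    ∀ z ∈ disc,
      fderiv ℝ (fun w => fderiv ℝ F w 1) z 1 +
        fderiv ℝ (fun w => fderiv ℝ F w Complex.I) z Complex.I = 0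

lemma fderiv_phi {F G : ℂ → ℝ} {z : ℂ} (hF : DifferentiableAt ℝ F z)
    (hG : DifferentiableAt ℝ G z) (v : ℂ) :
    fderiv ℝ (fun w => (F w : ℂ) + Complex.I * (G w : ℂ)) z v
      = (fderiv ℝ F z v : ℂ) + Complex.I * (fderiv ℝ G z v : ℂ) := by
  have h1 : HasFDerivAt (fun w => (F w : ℂ)) (Complex.ofRealCLM.comp (fderiv ℝ F z)) z :=
    Complex.ofRealCLM.hasFDerivAt.comp z hF.hasFDerivAt
  have h2 : HasFDerivAt (fun w => Complex.I * (G w : ℂ))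
      (Complex.I • Complex.ofRealCLM.comp (fderiv ℝ G z)) z :=
    (Complex.ofRealCLM.hasFDerivAt.comp z hG.hasFDerivAt).const_mul Complex.I
  rw [show (fun w => (F w : ℂ) + Complex.I * (G w : ℂ)) = (fun w => (F w : ℂ)) + (fun w => Complex.I * (G w : ℂ)) from rfl, (h1.add h2).fderiv]
  simp [smul_eq_mul]

lemma jac_key (F G : ℂ → ℝ) (z : ℂ) (hF : DifferentiableAt ℝ F z)
    (hG : DifferentiableAt ℝ G z) :
    |jac (fun w => (F w : ℂ) + Complex.I * (G w : ℂ)) z| =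
      2 * ‖wirtR G z * conj (wirtR F z) - wirtR F z * conj (wirtR G z)‖ := by
  set a := fderiv ℝ F z 1
  set b := fderiv ℝ F z Complex.I
  set c := fderiv ℝ G z 1
  set d := fderiv ℝ G z Complex.I
  have hjac : jac (fun w => (F w : ℂ) + Complex.I * (G w : ℂ)) z = a * d - b * c := by
    unfold jac wirtZ wirtZbar
    rw [fderiv_phi hF hG, fderiv_phi hF hG]
    have hu : ((a : ℂ) + Complex.I * c - Complex.I * ((b : ℂ) + Complex.I * d)) / 2
        = (((a + d) / 2 : ℝ) : ℂ) + (((c - b) / 2 : ℝ) : ℂ) * Complex.I := by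
      push_cast; ring_nf; simp [Complex.I_sq]; ring
    have hv : ((a : ℂ) + Complex.I * c + Complex.I * ((b : ℂ) + Complex.I * d)) / 2
        = (((a - d) / 2 : ℝ) : ℂ) + (((c + b) / 2 : ℝ) : ℂ) * Complex.I := by
      push_cast; ring_nf; simp [Complex.I_sq]; ring
    rw [hu, hv]
    rw [Complex.sq_norm, Complex.sq_norm,
      Complex.normSq_add_mul_I, Complex.normSq_add_mul_I]
    ring
  have hrhs : wirtR G z * conj (wirtR F z) - wirtR F z * conj (wirtR G z)
      = (((b * c - a * d) / 2 : ℝ) : ℂ) * Complex.I := by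
    unfold wirtR
    simp only [map_div₀, map_sub, map_mul, Complex.conj_ofReal, Complex.conj_I, map_ofNat]
    push_cast
    ring
  rw [hjac, hrhs, norm_mul, Complex.norm_I, Complex.norm_real, Real.norm_eq_abs, mul_one,
    abs_div]
  rw [abs_sub_comm (b * c)]
  rw [abs_of_pos (by norm_num : (0:ℝ) < 2)]
  ring

lemma measurable_wirtR (F : ℂ → ℝ) : Measurable (wirtR F) := by
  unfold wirtR
  exact ((Complex.measurable_ofReal.comp (measurable_fderiv_apply_const ℝ F 1)).sub
    ((Complex.measurable_ofReal.comp (measurable_fderiv_apply_const ℝ F Complex.I)).const_mul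
      Complex.I)).div_const 2

lemma memLp_aux (F : ℂ → ℝ) (p : ℝ) (hp : 1 < p)
    (hFp : IntegrableOn (fun z : ℂ => (1 - ‖z‖ ^ 2) ^ (p - 2) * ‖wirtR F z‖ ^ p) disc volume) :
    MemLp (fun z : ℂ => (1 - ‖z‖ ^ 2) ^ ((p - 2) / p) * ‖wirtR F z‖) (ENNReal.ofReal p)
      (volume.restrict disc) := by
  have hp0 : (0:ℝ) < p := by linarith
  have hne : ENNReal.ofReal p ≠ 0 := (ENNReal.ofReal_pos.2 hp0).ne'
  set fp : ℂ → ℝ := fun z => (1 - ‖z‖ ^ 2) ^ ((p - 2) / p) * ‖wirtR F z‖ with hfp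
  have mfp : Measurable fp := by
    have := measurable_wirtR F
    fun_prop
  have h1 : MemLp (fun z => ‖fp z‖ ^ (ENNReal.ofReal p).toReal)
      (ENNReal.ofReal p / ENNReal.ofReal p) (volume.restrict disc) := by
    rw [ENNReal.div_self hne ENNReal.ofReal_ne_top, memLp_one_iff_integrable]
    apply hFp.congr
    refine (ae_restrict_iff' (measurableSet_ball)).2 (Filter.Eventually.of_forall fun z hz => ?_)
    have hz1 : (0:ℝ) < 1 - ‖z‖ ^ 2 := by
      have : ‖z‖ < 1 := by simpa [disc] using hz
      nlinarith [norm_nonneg z]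
    show (1 - ‖z‖ ^ 2) ^ (p - 2) * ‖wirtR F z‖ ^ p = ‖fp z‖ ^ (ENNReal.ofReal p).toReal
    rw [ENNReal.toReal_ofReal hp0.le, hfp]
    rw [Real.norm_eq_abs,
      _root_.abs_of_nonneg (mul_nonneg (Real.rpow_nonneg hz1.le _) (norm_nonneg _)),
      Real.mul_rpow (Real.rpow_nonneg hz1.le _) (norm_nonneg _),
      ← Real.rpow_mul hz1.le, div_mul_cancel₀ _ hp0.ne']
  rw [← memLp_norm_rpow_iff mfp.aestronglyMeasurable hne ENNReal.ofReal_ne_top]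
  exact h1

set_option maxHeartbeats 1000000 in
/-- If `F, G` are harmonic on `𝔻`, `1/p + 1/q = 1` with `p, q > 1`, and the Besov-type
integrals of `∂F/∂z` and `∂G/∂z` are finite, then `∫_𝔻 |J(F + iG)| < ∞`; moreover
`|J(Φ)| = 2|∂G/∂z ⋅ conj(∂F/∂z) - ∂F/∂z ⋅ conj(∂G/∂z)|` on `𝔻`. -/
theorem statement15 (F G : ℂ → ℝ) (hF : HarmonicOnDisc F) (hG : HarmonicOnDisc G)
    (p q : ℝ) (hp : 1 < p) (hq : 1 < q) (hpq : 1 / p + 1 / q = 1)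
    (hFp : IntegrableOn (fun z : ℂ => (1 - ‖z‖ ^ 2) ^ (p - 2) * ‖wirtR F z‖ ^ p) disc volume)
    (hGq : IntegrableOn (fun z : ℂ => (1 - ‖z‖ ^ 2) ^ (q - 2) * ‖wirtR G z‖ ^ q) disc volume) :
    (∀ z ∈ disc,
        |jac (fun w => (F w : ℂ) + Complex.I * (G w : ℂ)) z| =
          2 * ‖wirtR G z * conj (wirtR F z) - wirtR F z * conj (wirtR G z)‖) ∧
      IntegrableOn (fun z => |jac (fun w => (F w : ℂ) + Complex.I * (G w : ℂ)) z|)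
        disc volume := by
  have hp0 : (0:ℝ) < p := by linarith
  have hq0 : (0:ℝ) < q := by linarith
  have hopen : IsOpen disc := Metric.isOpen_ball
  have dF : ∀ z ∈ disc, DifferentiableAt ℝ F z := fun z hz =>
    ((hF.1.differentiableOn two_ne_zero) z hz).differentiableAt (hopen.mem_nhds hz)
  have dG : ∀ z ∈ disc, DifferentiableAt ℝ G z := fun z hz =>
    ((hG.1.differentiableOn two_ne_zero) z hz).differentiableAt (hopen.mem_nhds hz)
  have hkey : ∀ z ∈ disc,
      |jac (fun w => (F w : ℂ) + Complex.I * (G w : ℂ)) z| =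
        2 * ‖wirtR G z * conj (wirtR F z) - wirtR F z * conj (wirtR G z)‖ :=
    fun z hz => jac_key F G z (dF z hz) (dG z hz)
  refine ⟨hkey, ?_⟩
  -- Hölder
  have hmemF := memLp_aux F p hp hFp
  have hmemG := memLp_aux G q hq hGq
  have hexp : (1 : ENNReal) / 1 = 1 / ENNReal.ofReal p + 1 / ENNReal.ofReal q := by
    rw [one_div, one_div, one_div, inv_one, ← ENNReal.ofReal_inv_of_pos hp0,
      ← ENNReal.ofReal_inv_of_pos hq0, ← ENNReal.ofReal_add (by positivity) (by positivity)]
    rw [show p⁻¹ + q⁻¹ = 1 by rw [← one_div, ← one_div]; exact hpq]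
    simp
  have hmul : Integrable (fun z : ℂ =>
      ((1 - ‖z‖ ^ 2) ^ ((p - 2) / p) * ‖wirtR F z‖) *
        ((1 - ‖z‖ ^ 2) ^ ((q - 2) / q) * ‖wirtR G z‖)) (volume.restrict disc) := by
    have h2 := MemLp.smul (μ := volume.restrict disc) (r := 1) (hpqr := ⟨by simpa [one_div] using hexp.symm⟩) hmemG hmemF
    rw [← memLp_one_iff_integrable]
    exact h2
  have hmeasjac : AEStronglyMeasurable
      (fun z => |jac (fun w => (F w : ℂ) + Complex.I * (G w : ℂ)) z|)
      (volume.restrict disc) := by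
    set Φ : ℂ → ℂ := fun w => (F w : ℂ) + Complex.I * (G w : ℂ)
    have m1 : Measurable fun z => ‖wirtZ Φ z‖ := by
      unfold wirtZ
      exact (((measurable_fderiv_apply_const ℝ Φ 1).sub
        ((measurable_fderiv_apply_const ℝ Φ Complex.I).const_mul Complex.I)).div_const 2).norm
    have m2 : Measurable fun z => ‖wirtZbar Φ z‖ := by
      unfold wirtZbar
      exact (((measurable_fderiv_apply_const ℝ Φ 1).add
        ((measurable_fderiv_apply_const ℝ Φ Complex.I).const_mul Complex.I)).div_const 2).norm
    exact (((m1.pow_const 2).sub (m2.pow_const 2)).abs).aestronglyMeasurable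
  refine Integrable.mono' (hmul.const_mul 4) hmeasjac ?_
  refine (ae_restrict_iff' measurableSet_ball).2 (Filter.Eventually.of_forall fun z hz => ?_)
  have hz1 : (0:ℝ) < 1 - ‖z‖ ^ 2 := by
    have : ‖z‖ < 1 := by simpa [disc] using hz
    nlinarith [norm_nonneg z]
  have hw : (1 - ‖z‖ ^ 2) ^ ((p - 2) / p) * (1 - ‖z‖ ^ 2) ^ ((q - 2) / q) = 1 := by
    rw [← Real.rpow_add hz1]
    rw [show (p - 2) / p + (q - 2) / q = 0 by
      field_simp
      field_simp at hpq
      nlinarith [hpq]]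
    exact Real.rpow_zero _
  rw [Real.norm_eq_abs, _root_.abs_abs, hkey z hz]
  calc 2 * ‖wirtR G z * conj (wirtR F z) - wirtR F z * conj (wirtR G z)‖
      ≤ 2 * (‖wirtR G z * conj (wirtR F z)‖ + ‖wirtR F z * conj (wirtR G z)‖) := by
        have := norm_sub_le (wirtR G z * conj (wirtR F z)) (wirtR F z * conj (wirtR G z))
        linarith
    _ = 4 * (‖wirtR F z‖ * ‖wirtR G z‖) := by
        rw [norm_mul, norm_mul, RCLike.norm_conj, RCLike.norm_conj]; ring
    _ = 4 * (((1 - ‖z‖ ^ 2) ^ ((p - 2) / p) * ‖wirtR F z‖) *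
          ((1 - ‖z‖ ^ 2) ^ ((q - 2) / q) * ‖wirtR G z‖)) := by
        rw [show ((1 - ‖z‖ ^ 2) ^ ((p - 2) / p) * ‖wirtR F z‖) *
            ((1 - ‖z‖ ^ 2) ^ ((q - 2) / q) * ‖wirtR G z‖)
          = ((1 - ‖z‖ ^ 2) ^ ((p - 2) / p) * (1 - ‖z‖ ^ 2) ^ ((q - 2) / q)) *
            (‖wirtR F z‖ * ‖wirtR G z‖) from by ring, hw, one_mul]

end HH
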